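/- Let T be a finite tree with at least one edge, v a vertex of T, and for k ≥ 2 let T_k be the tree obtained from T by attaching k new pendant edges g_1, …, g_k at v. If λ_max(R_{T_k}) is a simple eigenvalue of R_{T_k} and f is any eigenvector of R_{T_k} with eigenvalue λ_max(R_{T_k}), then f takes the same value on all the new pendant edges: f(g_i) = f(g_j) for all 1 ≤ i, j ≤ k. -/

import Mathlib

open SimpleGraph Matrix Finset

/-- The largest eigenvalue of a real matrix, defined as the supremum of its set of
real eigenvalues. -/
noncomputable def lambdaMax {n : Type*} [Fintype n] (M : Matrix n n ℝ) : ℝ :=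
  sSup {μ : ℝ | ∃ x : n → ℝ, x ≠ 0 ∧ M.mulVec x = μ • x}

/-- The Ricci matrix of a graph: `(R)_{e,e} = -(1/d_x + 1/d_y)` for `e = {x,y}`,
`(R)_{e,e'} = 1/d_z` for distinct edges sharing the endpoint `z`, and `0` for
disjoint edges. -/
noncomputable def ricciMatrix {V : Type*} [Fintype V] [DecidableEq V]
    (G : SimpleGraph V) [DecidableRel G.Adj] :
    Matrix G.edgeSet G.edgeSet ℝ := fun e e' =>
  (if e = e' then (-1 : ℝ) else 1) *
    ∑ z : V, (if z ∈ (e : Sym2 V) ∧ z ∈ (e' : Sym2 V) then ((G.degree z : ℝ))⁻¹ else 0)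

/-- Adjacency for the tree obtained by attaching `k` new pendant vertices at `v`. -/
def addLeavesAdj {V : Type*} (G : SimpleGraph V) (v : V) (k : ℕ) :
    V ⊕ Fin k → V ⊕ Fin k → Prop
  | Sum.inl x, Sum.inl y => G.Adj x y
  | Sum.inl x, Sum.inr _ => x = v
  | Sum.inr _, Sum.inl y => y = v
  | Sum.inr _, Sum.inr _ => False

/-- The tree obtained from `G` by attaching `k` new pendant edges at `v`:
`k` new vertices `Sum.inr i`, each joined to `v` by a new edge. -/
def addLeaves {V : Type*} (G : SimpleGraph V) (v : V) (k : ℕ) :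
    SimpleGraph (V ⊕ Fin k) where
  Adj := addLeavesAdj G v k
  symm := by
    constructor
    intro a b h
    cases a <;> cases b <;> simp_all [addLeavesAdj] <;> exact h.symm
  loopless := by
    constructor
    intro a
    cases a <;> simp [addLeavesAdj]

instance {V : Type*} [DecidableEq V] (G : SimpleGraph V) [DecidableRel G.Adj]
    (v : V) (k : ℕ) : DecidableRel (addLeaves G v k).Adj := fun a b =>
  match a, b with
  | Sum.inl x, Sum.inl y => inferInstanceAs (Decidable (G.Adj x y))
  | Sum.inl x, Sum.inr _ => inferInstanceAs (Decidable (x = v))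
  | Sum.inr _, Sum.inl y => inferInstanceAs (Decidable (y = v))
  | Sum.inr _, Sum.inr _ => inferInstanceAs (Decidable False)

/-- The extension `f_y` of an edge function `f` on `G` to `addLeaves G v 1`:
it agrees with `f` on (the images of) old edges and takes the value `y` on the new
pendant edge. -/
noncomputable def extendLeaf {V : Type*} [Fintype V] [DecidableEq V]
    (G : SimpleGraph V) [DecidableRel G.Adj] (v : V) (f : G.edgeSet → ℝ) (y : ℝ) :
    (addLeaves G v 1).edgeSet → ℝ := fun e =>
  if h : ∃ e₀ : G.edgeSet, Sym2.map Sum.inl (e₀ : Sym2 V) = (e : Sym2 (V ⊕ Fin 1))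
  then f h.choose else y

/-- The `i`-th new pendant edge `g_i = {v, (new vertex i)}` of `addLeaves G v k`. -/
def newEdge {V : Type*} (G : SimpleGraph V) (v : V) (k : ℕ) (i : Fin k) :
    (addLeaves G v k).edgeSet :=
  ⟨s(Sum.inl v, Sum.inr i), (addLeaves G v k).mem_edgeSet.mpr rfl⟩


section RayleighAux
variable {n : Type*} [Fintype n] [DecidableEq n]

lemma mem_eigs_iff {M : Matrix n n ℝ} {μ : ℝ} :
    (∃ x : n → ℝ, x ≠ 0 ∧ M.mulVec x = μ • x) ↔ Module.End.HasEigenvalue (Matrix.toLin' M : Module.End ℝ (n → ℝ)) μ := by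
  rw [Module.End.hasEigenvalue_iff, Submodule.ne_bot_iff]
  constructor
  · rintro ⟨x, hx, hMx⟩
    exact ⟨x, Module.End.mem_eigenspace_iff.mpr (by simpa [Matrix.toLin'_apply] using hMx), hx⟩
  · rintro ⟨x, hmem, hx⟩
    exact ⟨x, hx, by simpa [Matrix.toLin'_apply] using Module.End.mem_eigenspace_iff.mp hmem⟩

lemma bddAbove_eigs (M : Matrix n n ℝ) :
    BddAbove {μ : ℝ | ∃ x : n → ℝ, x ≠ 0 ∧ M.mulVec x = μ • x} := by
  have hsub : {μ : ℝ | ∃ x : n → ℝ, x ≠ 0 ∧ M.mulVec x = μ • x} ⊆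
      setOf (Module.End.HasEigenvalue (Matrix.toLin' M : Module.End ℝ (n → ℝ))) := fun μ h => mem_eigs_iff.mp h
  exact ((Module.End.finite_hasEigenvalue (Matrix.toLin' M : Module.End ℝ (n → ℝ))).subset hsub).bddAbove

lemma dotProduct_mulVec_le_lambdaMax (M : Matrix n n ℝ) (hM : M.IsHermitian) (u : n → ℝ) :
    u ⬝ᵥ M.mulVec u ≤ lambdaMax M * (u ⬝ᵥ u) := by
  set lam := lambdaMax M with hlam
  set M' : Matrix n n ℝ := lam • 1 - M with hM'def
  have hM' : M'.IsHermitian := by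
    simp only [Matrix.IsHermitian, hM'def, Matrix.conjTranspose_sub, Matrix.conjTranspose_smul,
      star_trivial, Matrix.conjTranspose_one, hM.eq]
  have hpos : M'.PosSemidef := by
    apply hM'.posSemidef_iff_eigenvalues_nonneg.mpr
    intro jj
    change 0 ≤ hM'.eigenvalues jj
    by_contra hneg
    push_neg at hneg
    have hb := hM'.mulVec_eigenvectorBasis jj
    set b : n → ℝ := ⇑(hM'.eigenvectorBasis jj) with hbdef
    have hbne : b ≠ 0 := by
      intro h
      exact hM'.eigenvectorBasis.toBasis.ne_zero jj (by ext x; exact congrFun h x)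
    have hMb : M.mulVec b = (lam - hM'.eigenvalues jj) • b := by
      have h2 : M'.mulVec b = lam • b - M.mulVec b := by
        simp [hM'def, Matrix.sub_mulVec, Matrix.smul_mulVec, Matrix.one_mulVec]
      rw [h2] at hb
      rw [sub_smul, ← hb]
      abel
    have hmem : (lam - hM'.eigenvalues jj) ∈
        {μ : ℝ | ∃ x : n → ℝ, x ≠ 0 ∧ M.mulVec x = μ • x} := ⟨b, hbne, hMb⟩
    have hle : lam - hM'.eigenvalues jj ≤ lam := le_csSup (bddAbove_eigs M) hmem
    linarith
  have h0 := hpos.dotProduct_mulVec_nonneg u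
  have hsu : star u = u := funext fun _ => star_trivial _
  have hval : star u ⬝ᵥ M'.mulVec u = lam * (u ⬝ᵥ u) - u ⬝ᵥ M.mulVec u := by
    rw [hsu]
    simp [hM'def, Matrix.sub_mulVec, Matrix.smul_mulVec, Matrix.one_mulVec,
      dotProduct_sub, dotProduct_smul, smul_eq_mul]
  rw [hval] at h0
  linarith

end RayleighAux
section GraphAux
variable {V : Type*} [Fintype V] [DecidableEq V] (G : SimpleGraph V) [DecidableRel G.Adj]
  (v : V) {k : ℕ}

lemma addLeaves_adj_iff (a b : V ⊕ Fin k) :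
    (addLeaves G v k).Adj a b ↔ addLeavesAdj G v k a b := Iff.rfl

lemma degree_inr (i : Fin k) : (addLeaves G v k).degree (Sum.inr i) = 1 := by
  have hns : (addLeaves G v k).neighborFinset (Sum.inr i) = {Sum.inl v} := by
    ext w
    rw [SimpleGraph.mem_neighborFinset, addLeaves_adj_iff]
    cases w with
    | inl y => simp [addLeavesAdj]
    | inr m => simp [addLeavesAdj]
  rw [SimpleGraph.degree, hns, Finset.card_singleton]

lemma degree_inl_v_pos (i : Fin k) : 0 < (addLeaves G v k).degree (Sum.inl v) := by
  rw [SimpleGraph.degree, Finset.card_pos]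
  exact ⟨Sum.inr i, (SimpleGraph.mem_neighborFinset _ _ _).mpr
    ((addLeaves_adj_iff G v _ _).mpr rfl)⟩

lemma newEdge_ne {i j : Fin k} (hij : i ≠ j) : newEdge G v k i ≠ newEdge G v k j := by
  intro h
  apply hij
  have := Subtype.ext_iff.mp h
  simp only [newEdge, Sym2.eq, Sym2.rel_iff', Prod.mk.injEq, Prod.swap_prod_mk] at this
  rcases this with ⟨-, h2⟩ | ⟨h1, -⟩
  · exact Sum.inr.inj h2
  · exact absurd h1 (by simp)

lemma mem_newEdge (z : V ⊕ Fin k) (i : Fin k) :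
    z ∈ (newEdge G v k i : Sym2 (V ⊕ Fin k)) ↔ z = Sum.inl v ∨ z = Sum.inr i := by
  simp [newEdge]

lemma eq_newEdge_of_mem (i : Fin k) (e : (addLeaves G v k).edgeSet)
    (h : Sum.inr i ∈ (e : Sym2 (V ⊕ Fin k))) : e = newEdge G v k i := by
  obtain ⟨e, he⟩ := e
  induction e with
  | h a b =>
    rw [SimpleGraph.mem_edgeSet, addLeaves_adj_iff] at he
    simp only [Sym2.mem_iff] at h
    apply Subtype.ext
    simp only [newEdge]
    rcases h with h | h <;> subst h
    · cases b with
      | inl y =>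
        have hy : y = v := he
        subst hy; exact Sym2.eq_swap
      | inr m => exact absurd he (by simp [addLeavesAdj])
    · cases a with
      | inl y =>
        have hy : y = v := he
        subst hy; rfl
      | inr m => exact absurd he (by simp [addLeavesAdj])

lemma ricci_newEdge (e : (addLeaves G v k).edgeSet) (i : Fin k) :
    ricciMatrix (addLeaves G v k) e (newEdge G v k i) =
      if e = newEdge G v k i
      then -((((addLeaves G v k).degree (Sum.inl v) : ℝ))⁻¹ + 1)
      else if (Sum.inl v : V ⊕ Fin k) ∈ (e : Sym2 (V ⊕ Fin k))
           then (((addLeaves G v k).degree (Sum.inl v) : ℝ))⁻¹ else 0 := by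
  set d : ℝ := (((addLeaves G v k).degree (Sum.inl v) : ℝ)) with hd
  by_cases h : e = newEdge G v k i
  · subst h
    rw [ricciMatrix, if_pos rfl, if_pos rfl]
    have hsum : ∀ z : V ⊕ Fin k,
        (if z ∈ (newEdge G v k i : Sym2 (V ⊕ Fin k)) ∧ z ∈ (newEdge G v k i : Sym2 (V ⊕ Fin k))
          then (((addLeaves G v k).degree z : ℝ))⁻¹ else 0)
        = (if z = Sum.inl v then d⁻¹ else 0) + (if z = Sum.inr i then 1 else 0) := by
      intro z
      simp only [and_self, mem_newEdge]
      rcases eq_or_ne z (Sum.inl v) with rfl | hzv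
      · simp [hd]
      · rcases eq_or_ne z (Sum.inr i) with rfl | hzi
        · simp [hzv, degree_inr]
        · simp [hzv, hzi]
    rw [Finset.sum_congr rfl (fun z _ => hsum z), Finset.sum_add_distrib,
      Finset.sum_ite_eq' Finset.univ (Sum.inl v : V ⊕ Fin k),
      Finset.sum_ite_eq' Finset.univ (Sum.inr i : V ⊕ Fin k)]
    simp only [Finset.mem_univ, if_true]
    ring
  · rw [ricciMatrix, if_neg h, if_neg h]
    have hnotmem : Sum.inr i ∉ (e : Sym2 (V ⊕ Fin k)) := fun hc => h (eq_newEdge_of_mem G v i e hc)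
    have hsum : ∀ z : V ⊕ Fin k,
        (if z ∈ (e : Sym2 (V ⊕ Fin k)) ∧ z ∈ (newEdge G v k i : Sym2 (V ⊕ Fin k))
          then (((addLeaves G v k).degree z : ℝ))⁻¹ else 0)
        = if z = Sum.inl v then (if (Sum.inl v : V ⊕ Fin k) ∈ (e : Sym2 (V ⊕ Fin k)) then d⁻¹ else 0)
          else 0 := by
      intro z
      simp only [mem_newEdge]
      rcases eq_or_ne z (Sum.inl v) with rfl | hzv
      · by_cases hv : (Sum.inl v : V ⊕ Fin k) ∈ (e : Sym2 (V ⊕ Fin k)) <;> simp [hv, hd]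
      · rcases eq_or_ne z (Sum.inr i) with rfl | hzi
        · simp [hzv, hnotmem]
        · simp [hzv, hzi]
    rw [Finset.sum_congr rfl (fun z _ => hsum z),
      Finset.sum_ite_eq' Finset.univ (Sum.inl v : V ⊕ Fin k)]
    simp

lemma ricci_isHermitian {W : Type*} [Fintype W] [DecidableEq W] (H : SimpleGraph W)
    [DecidableRel H.Adj] : (ricciMatrix H).IsHermitian := by
  ext e e'
  simp only [ricciMatrix, Matrix.conjTranspose_apply, star_trivial]
  congr 1
  · simp [eq_comm]
  · exact Finset.sum_congr rfl fun z _ => if_congr and_comm rfl rfl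

end GraphAux

/-- If `λ_max(R_{T_k})` is a simple eigenvalue (algebraic multiplicity one as a root of
the characteristic polynomial), then every eigenvector of `R_{T_k}` for `λ_max(R_{T_k})`
takes the same value on all the `k` new pendant edges. -/
theorem eigenvector_constant_on_new_leaves {V : Type*} [Fintype V] [DecidableEq V]
    (G : SimpleGraph V) [DecidableRel G.Adj]
    (hT : G.IsTree) (h1 : 1 ≤ G.edgeFinset.card) (v : V) (k : ℕ) (hk : 2 ≤ k)
    (hsimple :
      (ricciMatrix (addLeaves G v k)).charpoly.rootMultiplicity
        (lambdaMax (ricciMatrix (addLeaves G v k))) = 1)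
    (f : (addLeaves G v k).edgeSet → ℝ) (hf : f ≠ 0)
    (heig : (ricciMatrix (addLeaves G v k)).mulVec f =
      lambdaMax (ricciMatrix (addLeaves G v k)) • f)
    (i j : Fin k) :
    f (newEdge G v k i) = f (newEdge G v k j) := by
  rcases eq_or_ne i j with rfl | hij
  · rfl
  set R := ricciMatrix (addLeaves G v k) with hR
  set lam := lambdaMax (ricciMatrix (addLeaves G v k)) with hlam
  set d : ℝ := (((addLeaves G v k).degree (Sum.inl v) : ℝ)) with hd
  have hdpos : 0 < d := by
    rw [hd]
    exact_mod_cast degree_inl_v_pos G v i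
  have hne : newEdge G v k i ≠ newEdge G v k j := newEdge_ne G v hij
  have hherm : R.IsHermitian := ricci_isHermitian _
  set μ : ℝ := -(1 + 2 * d⁻¹) with hμ
  set g : (addLeaves G v k).edgeSet → ℝ := fun e =>
    (if e = newEdge G v k i then (1 : ℝ) else 0) - (if e = newEdge G v k j then 1 else 0)
    with hg
  -- `g` is an eigenvector of `R` with eigenvalue `μ`.
  have hgeig : R.mulVec g = μ • g := by
    funext e
    have hcol : R.mulVec g e = R e (newEdge G v k i) - R e (newEdge G v k j) := by
      simp only [Matrix.mulVec, dotProduct, hg, mul_sub, mul_ite, mul_one, mul_zero,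
        Finset.sum_sub_distrib, Finset.sum_ite_eq' Finset.univ, Finset.mem_univ, if_true]
    rw [hcol, hR, ricci_newEdge, ricci_newEdge, ← hd]
    rcases eq_or_ne e (newEdge G v k i) with rfl | h1
    · have hv : (Sum.inl v : V ⊕ Fin k) ∈ ((newEdge G v k i : Sym2 (V ⊕ Fin k))) := by
        simp [mem_newEdge]
      simp only [if_pos rfl, if_neg hne, if_pos hv, Pi.smul_apply, hg, hμ,
        if_pos rfl, if_neg hne, smul_eq_mul, if_true]
      ring
    · rcases eq_or_ne e (newEdge G v k j) with rfl | h2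
      · have hv : (Sum.inl v : V ⊕ Fin k) ∈ ((newEdge G v k j : Sym2 (V ⊕ Fin k))) := by
          simp [mem_newEdge]
        simp only [if_neg h1, if_pos rfl, if_pos hv, Pi.smul_apply, hg, hμ,
          if_neg h1, if_pos rfl, smul_eq_mul, if_true]
        ring
      · simp only [if_neg h1, if_neg h2, Pi.smul_apply, hg, smul_eq_mul]
        by_cases hv : (Sum.inl v : V ⊕ Fin k) ∈ (e : Sym2 (V ⊕ Fin k)) <;> simp [hv]
  -- `lam` is strictly bigger than `μ`, by testing against the basis vector at `g_i`.
  have hlamgt : μ < lam := by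
    have hray := dotProduct_mulVec_le_lambdaMax R hherm (Pi.single (newEdge G v k i) (1 : ℝ))
    rw [Matrix.mulVec_single] at hray
    have hcol : MulOpposite.op (1 : ℝ) • R.col (newEdge G v k i) =
        fun e => R e (newEdge G v k i) * 1 := by
      ext; simp
    rw [hcol] at hray
    have h2 : (Pi.single (newEdge G v k i) (1 : ℝ)) ⬝ᵥ (fun e => R e (newEdge G v k i) * 1)
        = R (newEdge G v k i) (newEdge G v k i) := by
      rw [single_dotProduct]; ring
    have h3 : (Pi.single (newEdge G v k i) (1 : ℝ)) ⬝ᵥ (Pi.single (newEdge G v k i) (1 : ℝ))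
        = 1 := by
      rw [single_dotProduct, Pi.single_eq_same]; ring
    rw [h2, h3, mul_one] at hray
    have h4 : R (newEdge G v k i) (newEdge G v k i) = -(d⁻¹ + 1) := by
      rw [hR, ricci_newEdge, if_pos rfl, ← hd]
    rw [h4] at hray
    have hdi : 0 < d⁻¹ := inv_pos.mpr hdpos
    rw [hμ]
    linarith
  -- orthogonality of eigenvectors for distinct eigenvalues
  have hsymm : ∀ e e' : (addLeaves G v k).edgeSet, R e e' = R e' e := by
    intro e e'
    conv_lhs => rw [← hherm.eq]
    rfl
  have hswap : f ⬝ᵥ R.mulVec g = R.mulVec f ⬝ᵥ g := by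
    simp only [Matrix.mulVec, dotProduct, Finset.mul_sum, Finset.sum_mul]
    rw [Finset.sum_comm]
    exact Finset.sum_congr rfl fun e' _ => Finset.sum_congr rfl fun e _ => by
      rw [hsymm e' e]; ring
  rw [hgeig, heig] at hswap
  have horth : f ⬝ᵥ g = 0 := by
    have : μ * (f ⬝ᵥ g) = lam * (f ⬝ᵥ g) := by
      simpa [dotProduct_smul, smul_dotProduct, smul_eq_mul] using hswap
    by_contra hne0
    exact (ne_of_lt hlamgt) (mul_right_cancel₀ hne0 (by linarith [this])).symm
  have hfg : f ⬝ᵥ g = f (newEdge G v k i) - f (newEdge G v k j) := by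
    simp only [dotProduct, hg, mul_sub, mul_ite, mul_one, mul_zero,
      Finset.sum_sub_distrib, Finset.sum_ite_eq' Finset.univ, Finset.mem_univ, if_true]
  rw [hfg] at horth
  linarith
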